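/- Let n ≥ 1, a ∈ ℝⁿ, d ∈ ℝ, and let S = {(x,y) ∈ [0,1]ⁿ × [0,1]ⁿ : ∑_{i=1}^n a_i x_i y_i ≥ d} be nonempty. Then at least one of the following holds: (a) there exists a partition (I, J₀, J₁) of [n] with I ≠ ∅ such that {a_i : i ∈ I} forms a minimal cover of d − ∑_{i∈J₁} a_i; or (b) the convex hull of S is a polytope, i.e., there exists a finite set F ⊆ ℝⁿ × ℝⁿ with conv(S) = conv(F). -/

import Mathlib

open Set

section helpers

variable {n : ℕ}

lemma sum_upd_x (a x y : Fin n → ℝ) (j : Fin n) (c : ℝ) :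
    ∑ i, a i * (Function.update x j c i * y i)
      = (∑ i, a i * (x i * y i)) + a j * ((c - x j) * y j) := by
  classical
  rw [Fintype.sum_eq_add_sum_compl j, Fintype.sum_eq_add_sum_compl j
    (fun i => a i * (x i * y i))]
  have h : ∑ i ∈ ({j}ᶜ : Finset (Fin n)), a i * (Function.update x j c i * y i)
      = ∑ i ∈ ({j}ᶜ : Finset (Fin n)), a i * (x i * y i) := by
    refine Finset.sum_congr rfl fun i hi => ?_
    rw [Function.update_of_ne (by simpa using hi)]
  rw [h, Function.update_self]
  ring

lemma sum_upd_y (a x y : Fin n → ℝ) (j : Fin n) (c : ℝ) :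
    ∑ i, a i * (x i * Function.update y j c i)
      = (∑ i, a i * (x i * y i)) + a j * (x j * (c - y j)) := by
  classical
  rw [Fintype.sum_eq_add_sum_compl j, Fintype.sum_eq_add_sum_compl j
    (fun i => a i * (x i * y i))]
  have h : ∑ i ∈ ({j}ᶜ : Finset (Fin n)), a i * (x i * Function.update y j c i)
      = ∑ i ∈ ({j}ᶜ : Finset (Fin n)), a i * (x i * y i) := by
    refine Finset.sum_congr rfl fun i hi => ?_
    rw [Function.update_of_ne (by simpa using hi)]
  rw [h, Function.update_self]
  ring

lemma notExt {E : Type*} [AddCommGroup E] [Module ℝ E] {A : Set E} {p q e : E}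
    (hp : p ∈ A) (hq : q ∈ A) (hpq : p ≠ q) (he : e = (1/2 : ℝ) • p + (1/2 : ℝ) • q) :
    e ∉ (convexHull ℝ A).extremePoints ℝ := by
  intro hext
  rw [mem_extremePoints] at hext
  obtain ⟨-, hmin⟩ := hext
  obtain ⟨h1, h2⟩ := hmin p (subset_convexHull ℝ A hp) q (subset_convexHull ℝ A hq)
    ⟨1/2, 1/2, by norm_num, by norm_num, by norm_num, he.symm⟩
  exact hpq (h1.trans h2.symm)

lemma extreme_image {E F : Type*} [AddCommGroup E] [Module ℝ E] [AddCommGroup F] [Module ℝ F]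
    (L : E ≃ₗ[ℝ] F) {A : Set E} {x : E} (hx : x ∈ A.extremePoints ℝ) :
    L x ∈ (L '' A).extremePoints ℝ := by
  rw [mem_extremePoints] at hx ⊢
  obtain ⟨hxA, hmin⟩ := hx
  refine ⟨Set.mem_image_of_mem _ hxA, ?_⟩
  rintro _ ⟨u, hu, rfl⟩ _ ⟨v, hv, rfl⟩ ⟨s, t, hs, ht, hst, heq⟩
  have hxseg : x ∈ openSegment ℝ u v := by
    refine ⟨s, t, hs, ht, hst, L.injective ?_⟩
    simpa [map_add, map_smul] using heq
  obtain ⟨h1, h2⟩ := hmin u hu v hv hxseg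
  rw [h1, h2]
  exact ⟨rfl, rfl⟩

lemma pad_sum {β : Type*} [AddCommMonoid β] {m D : ℕ} (hmD : m ≤ D) (f : Fin m → β) :
    (∑ j : Fin D, if h : (j : ℕ) < m then f ⟨j, h⟩ else 0) = ∑ i, f i := by
  classical
  set g : ℕ → β := fun k => if h : k < m then f ⟨k, h⟩ else 0 with hg
  have h1 : (∑ j : Fin D, if h : (j : ℕ) < m then f ⟨j, h⟩ else 0) = ∑ k ∈ Finset.range D, g k :=
    (Fin.sum_univ_eq_sum_range g D)
  have h2 : ∑ k ∈ Finset.range m, g k = ∑ k ∈ Finset.range D, g k := by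
    refine Finset.sum_subset (Finset.range_subset_range.2 hmD) fun k _ hk => ?_
    rw [hg]
    exact dif_neg (by simpa using hk)
  have h3 : (∑ j : Fin m, if h : (j : ℕ) < m then f ⟨j, h⟩ else 0) = ∑ k ∈ Finset.range m, g k :=
    (Fin.sum_univ_eq_sum_range g m)
  have h4 : (∑ j : Fin m, if h : (j : ℕ) < m then f ⟨j, h⟩ else 0) = ∑ i, f i := by
    refine Finset.sum_congr rfl fun j _ => ?_
    rw [dif_pos j.isLt]
  rw [h1, ← h2, ← h3, h4]

lemma isCompact_convexHull' {E : Type*} [NormedAddCommGroup E] [NormedSpace ℝ E]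
    [FiniteDimensional ℝ E] {A : Set E} (hA : IsCompact A) :
    IsCompact (convexHull ℝ A) := by
  classical
  rcases A.eq_empty_or_nonempty with rfl | hAne
  · simpa using isCompact_empty
  set D := Module.finrank ℝ E + 1 with hD
  have key : convexHull ℝ A =
      (fun p : (Fin D → ℝ) × (Fin D → E) => ∑ i, p.1 i • p.2 i) ''
        ((stdSimplex ℝ (Fin D)) ×ˢ Set.univ.pi fun _ => A) := by
    apply Subset.antisymm
    · intro v hv
      obtain ⟨ι, hι, z, w, hzs, hzind, hwpos, hwsum, hwz⟩ :=
        eq_pos_convex_span_of_mem_convexHull hv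
      have hcard : Fintype.card ι ≤ D := by
        have h1 := hzind.card_le_finrank_succ
        have h2 : Module.finrank ℝ (vectorSpan ℝ (Set.range z)) ≤ Module.finrank ℝ E :=
          Submodule.finrank_le _
      
        omega
      set m := Fintype.card ι with hm
      have hmne : m ≠ 0 := by
        intro h0
        rw [hm, Fintype.card_eq_zero_iff] at h0
        rw [Finset.univ_eq_empty, Finset.sum_empty] at hwsum
        norm_num at hwsum
      obtain ⟨i0⟩ : Nonempty ι := Fintype.card_pos_iff.mp (Nat.pos_of_ne_zero hmne)
      let e : ι ≃ Fin m := Fintype.equivFin ι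
      set w' : Fin D → ℝ := fun j => if h : (j : ℕ) < m then w (e.symm ⟨j, h⟩) else 0 with hw'
      set z' : Fin D → E := fun j => if h : (j : ℕ) < m then z (e.symm ⟨j, h⟩) else z i0 with hz'
      have hsum1 : ∑ j : Fin D, w' j = 1 := by
        rw [hw']
        rw [pad_sum hcard (fun i : Fin m => w (e.symm i))]
        rw [Equiv.sum_comp e.symm w]
        exact hwsum
      have hw'p : ∀ (j : Fin D) (h : (j : ℕ) < m), w' j = w (e.symm ⟨j, h⟩) :=
        fun j h => dif_pos h
      have hw'n : ∀ (j : Fin D), ¬(j : ℕ) < m → w' j = 0 := fun j h => dif_neg h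
      have hz'p : ∀ (j : Fin D) (h : (j : ℕ) < m), z' j = z (e.symm ⟨j, h⟩) :=
        fun j h => dif_pos h
      have hz'n : ∀ (j : Fin D), ¬(j : ℕ) < m → z' j = z i0 := fun j h => dif_neg h
      refine ⟨(w', z'), ⟨⟨fun j => ?_, hsum1⟩, fun j _ => ?_⟩, ?_⟩
      · show 0 ≤ w' j
        by_cases h : (j : ℕ) < m
        · rw [hw'p j h]; exact (hwpos _).le
        · rw [hw'n j h]
      · show z' j ∈ A
        by_cases h : (j : ℕ) < m
        · rw [hz'p j h]; exact hzs ⟨_, rfl⟩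
        · rw [hz'n j h]; exact hzs ⟨_, rfl⟩
      · show ∑ j : Fin D, w' j • z' j = v
        have hterm : ∀ j : Fin D, w' j • z' j =
            if h : (j : ℕ) < m then w (e.symm ⟨j, h⟩) • z (e.symm ⟨j, h⟩) else 0 := by
          intro j
          by_cases h : (j : ℕ) < m
          · rw [hw'p j h, hz'p j h, dif_pos h]
          · rw [hw'n j h, dif_neg h, zero_smul]
        rw [Finset.sum_congr rfl fun j _ => hterm j]
        rw [pad_sum hcard (fun i : Fin m => w (e.symm i) • z (e.symm i))]
        rw [Equiv.sum_comp e.symm (fun i => w i • z i)]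
        exact hwz
    · rintro v ⟨⟨w, z⟩, ⟨⟨hw0, hw1⟩, hz⟩, rfl⟩
      exact Convex.sum_mem (convex_convexHull ℝ A) (fun i _ => hw0 i) hw1
        (fun i _ => subset_convexHull ℝ A (hz i (Set.mem_univ i)))
  rw [key]
  exact ((isCompact_stdSimplex ℝ _).prod (isCompact_univ_pi fun _ => hA)).image <| by
    apply continuous_finset_sum
    intro i _
    exact ((continuous_apply i).comp continuous_fst).smul
      ((continuous_apply i).comp continuous_snd)

end helpers
section bilinear

variable {n : ℕ}

/-- The separable bilinear set. -/
def SB (a : Fin n → ℝ) (d : ℝ) : Set ((Fin n → ℝ) × (Fin n → ℝ)) :=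
  {p | (∀ i, p.1 i ∈ Set.Icc (0 : ℝ) 1) ∧ (∀ i, p.2 i ∈ Set.Icc (0 : ℝ) 1) ∧
    d ≤ ∑ i, a i * (p.1 i * p.2 i)}

lemma SB_swap (a : Fin n → ℝ) (d : ℝ) :
    (LinearEquiv.prodComm ℝ (Fin n → ℝ) (Fin n → ℝ)) '' SB a d = SB a d := by
  ext p
  constructor
  · rintro ⟨⟨u, v⟩, ⟨h1, h2, h3⟩, rfl⟩
    refine ⟨h2, h1, ?_⟩
    simpa [mul_comm] using h3
  · rintro ⟨h1, h2, h3⟩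
    refine ⟨(p.2, p.1), ⟨h2, h1, by simpa [mul_comm] using h3⟩, by simp⟩

lemma swap_ext {a : Fin n → ℝ} {d : ℝ} {x y : Fin n → ℝ}
    (hx : (x, y) ∈ (convexHull ℝ (SB a d)).extremePoints ℝ) :
    (y, x) ∈ (convexHull ℝ (SB a d)).extremePoints ℝ := by
  have h1 := extreme_image (LinearEquiv.prodComm ℝ (Fin n → ℝ) (Fin n → ℝ)) hx
  have h2 : ⇑(LinearEquiv.prodComm ℝ (Fin n → ℝ) (Fin n → ℝ)) '' (convexHull ℝ (SB a d))
      = convexHull ℝ (SB a d) := by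
    rw [show ⇑(LinearEquiv.prodComm ℝ (Fin n → ℝ) (Fin n → ℝ)) =
      ⇑((LinearEquiv.prodComm ℝ (Fin n → ℝ) (Fin n → ℝ)).toLinearMap) from rfl,
      LinearMap.image_convexHull]
    rw [show ⇑((LinearEquiv.prodComm ℝ (Fin n → ℝ) (Fin n → ℝ)).toLinearMap) =
      ⇑(LinearEquiv.prodComm ℝ (Fin n → ℝ) (Fin n → ℝ)) from rfl, SB_swap]
  rw [h2] at h1
  simpa using h1

variable {a : Fin n → ℝ} {d : ℝ} {x y : Fin n → ℝ}

/-- Move: perturb a single first-coordinate with zero effective coefficient. -/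
lemma move_Ax (hmem : (x, y) ∈ SB a d) (j : Fin n) (h0 : 0 < x j) (h1 : x j < 1)
    (hc : a j * y j = 0) :
    (x, y) ∉ (convexHull ℝ (SB a d)).extremePoints ℝ := by
  obtain ⟨hx, hy, hd⟩ := hmem
  set ε : ℝ := min (x j) (1 - x j) with hε
  have hεpos : 0 < ε := lt_min h0 (by linarith)
  have hε1 : ε ≤ x j := min_le_left _ _
  have hε2 : ε ≤ 1 - x j := min_le_right _ _
  have hbox : ∀ c : ℝ, 0 ≤ c → c ≤ 1 → ∀ i, Function.update x j c i ∈ Set.Icc (0:ℝ) 1 := by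
    intro c hc0 hc1 i
    by_cases hij : i = j
    · subst hij; rw [Function.update_self]; exact ⟨hc0, hc1⟩
    · rw [Function.update_of_ne hij]; exact hx i
  have hsum : ∀ c : ℝ, ∑ i, a i * (Function.update x j c i * y i)
      = (∑ i, a i * (x i * y i)) + (c - x j) * (a j * y j) := by
    intro c; rw [sum_upd_x]; ring
  have hp : (Function.update x j (x j + ε), y) ∈ SB a d := by
    refine ⟨hbox _ (by linarith) (by linarith), hy, ?_⟩
    rw [hsum, hc]; linarith
  have hq : (Function.update x j (x j - ε), y) ∈ SB a d := by
    refine ⟨hbox _ (by linarith) (by linarith), hy, ?_⟩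
    rw [hsum, hc]; linarith
  refine notExt hp hq ?_ ?_
  · intro h
    have := congrArg (fun r => r.1 j) h
    simp only [Function.update_self] at this
    linarith
  · ext i
    · show x i = _
      simp only [Prod.fst_add, Prod.smul_fst, Pi.add_apply, Pi.smul_apply, smul_eq_mul,
        Function.update_apply]
      split_ifs with h
      · subst h; ring
      · ring
    · show y i = _
      simp only [Prod.snd_add, Prod.smul_snd, Pi.add_apply, Pi.smul_apply, smul_eq_mul]
      ring

/-- Move: slack plus an interior first-coordinate. -/
lemma move_slack (hmem : (x, y) ∈ SB a d) (j : Fin n) (h0 : 0 < x j) (h1 : x j < 1)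
    (hs : d < ∑ i, a i * (x i * y i)) :
    (x, y) ∉ (convexHull ℝ (SB a d)).extremePoints ℝ := by
  obtain ⟨hx, hy, hd⟩ := hmem
  set c : ℝ := a j * y j with hcdef
  set s : ℝ := (∑ i, a i * (x i * y i)) - d with hsdef
  have hspos : 0 < s := by simp only [hsdef]; linarith
  set ε : ℝ := min (min (x j) (1 - x j)) (s / (|c| + 1)) with hε
  have habs : 0 < |c| + 1 := by positivity
  have hεpos : 0 < ε := by
    apply lt_min (lt_min h0 (by linarith))
    positivity
  have hε1 : ε ≤ x j := le_trans (min_le_left _ _) (min_le_left _ _)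
  have hε2 : ε ≤ 1 - x j := le_trans (min_le_left _ _) (min_le_right _ _)
  have hε3 : ε * (|c| + 1) ≤ s := by
    have := le_trans (min_le_right _ _ : ε ≤ s / (|c| + 1)) le_rfl
    exact (le_div_iff₀ habs).mp this
  have hbound : |ε * c| < s := by
    rw [abs_mul, abs_of_pos hεpos]
    nlinarith [abs_nonneg c]
  have hbox : ∀ cc : ℝ, 0 ≤ cc → cc ≤ 1 → ∀ i, Function.update x j cc i ∈ Set.Icc (0:ℝ) 1 := by
    intro cc hc0 hc1 i
    by_cases hij : i = j
    · subst hij; rw [Function.update_self]; exact ⟨hc0, hc1⟩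
    · rw [Function.update_of_ne hij]; exact hx i
  have hsum : ∀ cc : ℝ, ∑ i, a i * (Function.update x j cc i * y i)
      = (∑ i, a i * (x i * y i)) + (cc - x j) * c := by
    intro cc; rw [sum_upd_x, hcdef]; ring
  have hna := neg_abs_le (ε * c)
  have hab := le_abs_self (ε * c)
  have hp : (Function.update x j (x j + ε), y) ∈ SB a d := by
    refine ⟨hbox _ (by linarith) (by linarith), hy, ?_⟩
    rw [hsum]
    have : (x j + ε - x j) * c = ε * c := by ring
    rw [this]
    simp only [hsdef] at hbound hspos
    nlinarith [abs_nonneg (ε * c)]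
  have hq : (Function.update x j (x j - ε), y) ∈ SB a d := by
    refine ⟨hbox _ (by linarith) (by linarith), hy, ?_⟩
    rw [hsum]
    have : (x j - ε - x j) * c = -(ε * c) := by ring
    rw [this]
    simp only [hsdef] at hbound hspos
    nlinarith [abs_nonneg (ε * c)]
  refine notExt hp hq ?_ ?_
  · intro h
    have := congrArg (fun r => r.1 j) h
    simp only [Function.update_self] at this
    linarith
  · ext i
    · show x i = _
      simp only [Prod.fst_add, Prod.smul_fst, Pi.add_apply, Pi.smul_apply, smul_eq_mul,
        Function.update_apply]
      split_ifs with h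
      · subst h; ring
      · ring
    · show y i = _
      simp only [Prod.snd_add, Prod.smul_snd, Pi.add_apply, Pi.smul_apply, smul_eq_mul]
      ring

end bilinear
section bilinear2

variable {n : ℕ} {a : Fin n → ℝ} {d : ℝ} {x y : Fin n → ℝ}

/-- Move: a negative-coefficient coordinate with both entries interior. -/
lemma move_curve (hmem : (x, y) ∈ SB a d) (j : Fin n) (haj : a j < 0)
    (h0x : 0 < x j) (h1x : x j < 1) (h0y : 0 < y j) (h1y : y j < 1) :
    (x, y) ∉ (convexHull ℝ (SB a d)).extremePoints ℝ := by
  obtain ⟨hx, hy, hd⟩ := hmem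
  set ε : ℝ := min 1 (min ((1 - x j) / x j) ((1 - y j) / y j)) with hε
  have hεpos : 0 < ε :=
    lt_min one_pos (lt_min (div_pos (by linarith) h0x) (div_pos (by linarith) h0y))
  have hε1 : ε ≤ 1 := min_le_left _ _
  have hεx : ε * x j ≤ 1 - x j := by
    have h : ε ≤ (1 - x j) / x j :=
      le_trans (min_le_right 1 ((1 - x j) / x j ⊓ (1 - y j) / y j))
        (min_le_left ((1 - x j) / x j) ((1 - y j) / y j))
    calc ε * x j ≤ ((1 - x j) / x j) * x j := by nlinarith
    _ = 1 - x j := by field_simp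
  have hεy : ε * y j ≤ 1 - y j := by
    have h : ε ≤ (1 - y j) / y j :=
      le_trans (min_le_right 1 ((1 - x j) / x j ⊓ (1 - y j) / y j))
        (min_le_right ((1 - x j) / x j) ((1 - y j) / y j))
    calc ε * y j ≤ ((1 - y j) / y j) * y j := by nlinarith
    _ = 1 - y j := by field_simp
  have hboxx : ∀ c : ℝ, 0 ≤ c → c ≤ 1 → ∀ i, Function.update x j c i ∈ Set.Icc (0:ℝ) 1 := by
    intro c hc0 hc1 i
    by_cases hij : i = j
    · subst hij; rw [Function.update_self]; exact ⟨hc0, hc1⟩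
    · rw [Function.update_of_ne hij]; exact hx i
  have hboxy : ∀ c : ℝ, 0 ≤ c → c ≤ 1 → ∀ i, Function.update y j c i ∈ Set.Icc (0:ℝ) 1 := by
    intro c hc0 hc1 i
    by_cases hij : i = j
    · subst hij; rw [Function.update_self]; exact ⟨hc0, hc1⟩
    · rw [Function.update_of_ne hij]; exact hy i
  have hsum : ∀ c c' : ℝ, ∑ i, a i * (Function.update x j c i * Function.update y j c' i)
      = (∑ i, a i * (x i * y i)) + a j * ((c - x j) * y j) + a j * (c * (c' - y j)) := by
    intro c c'
    rw [sum_upd_y a (Function.update x j c) y j c', sum_upd_x, Function.update_self]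
  have hkey : ∀ s : ℝ, s = 1 ∨ s = -1 →
      ((Function.update x j ((1 + s * ε) * x j), Function.update y j ((1 - s * ε) * y j))
        : (Fin n → ℝ) × (Fin n → ℝ)) ∈ SB a d := by
    intro s hs
    have hs2 : s * s = 1 := by rcases hs with rfl | rfl <;> ring
    have hsabs : s * ε ≤ ε ∧ -ε ≤ s * ε := by
      rcases hs with rfl | rfl <;> constructor <;> nlinarith
    refine ⟨hboxx _ (by nlinarith [hsabs.2]) (by nlinarith [hsabs.1, hεx]),
      hboxy _ (by nlinarith [hsabs.1]) (by nlinarith [hsabs.2, hεy]), ?_⟩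
    rw [hsum]
    have heq : a j * (((1 + s * ε) * x j - x j) * y j)
        + a j * ((1 + s * ε) * x j * ((1 - s * ε) * y j - y j))
        = (-(a j)) * ((s * ε) * (s * ε) * (x j * y j)) := by ring
    have h9 : 0 ≤ (-(a j)) * ((s * ε) * (s * ε) * (x j * y j)) :=
      mul_nonneg (by linarith) (mul_nonneg (mul_self_nonneg _)
        (mul_nonneg h0x.le h0y.le))
    linarith [heq, h9]
  have hp := hkey 1 (Or.inl rfl)
  have hq := hkey (-1) (Or.inr rfl)
  norm_num at hp hq
  refine notExt hp hq ?_ ?_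
  · intro h
    have := congrArg (fun r => r.1 j) h
    simp only [Function.update_self] at this
    nlinarith
  · ext i
    · show x i = _
      simp only [Prod.fst_add, Prod.smul_fst, Pi.add_apply, Pi.smul_apply, smul_eq_mul,
        Function.update_apply]
      split_ifs with h
      · subst h; ring
      · ring
    · show y i = _
      simp only [Prod.snd_add, Prod.smul_snd, Pi.add_apply, Pi.smul_apply, smul_eq_mul,
        Function.update_apply]
      split_ifs with h
      · subst h; ring
      · ring

/-- Move: two distinct coordinates, both with interior first entries and
nonvanishing effective coefficients. -/
lemma move_Dxx (hmem : (x, y) ∈ SB a d) (j k : Fin n) (hjk : j ≠ k)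
    (h0j : 0 < x j) (h1j : x j < 1) (h0k : 0 < x k) (h1k : x k < 1)
    (hcj : a j * y j ≠ 0) (hck : a k * y k ≠ 0) :
    (x, y) ∉ (convexHull ℝ (SB a d)).extremePoints ℝ := by
  obtain ⟨hx, hy, hd⟩ := hmem
  set cj : ℝ := a j * y j with hcjdef
  set ck : ℝ := a k * y k with hckdef
  have hcja : 0 < |cj| := abs_pos.mpr hcj
  have hcka : 0 < |ck| := abs_pos.mpr hck
  set t : ℝ := min (min (x j) (1 - x j) / |ck|) (min (x k) (1 - x k) / |cj|) with ht
  have htpos : 0 < t := by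
    apply lt_min <;> apply div_pos (lt_min (by linarith) (by linarith)) <;> assumption
  have htck : t * |ck| ≤ min (x j) (1 - x j) := by
    have h := min_le_left (min (x j) (1 - x j) / |ck|) (min (x k) (1 - x k) / |cj|)
    calc t * |ck| ≤ (min (x j) (1 - x j) / |ck|) * |ck| := by nlinarith
    _ = min (x j) (1 - x j) := by field_simp
  have htcj : t * |cj| ≤ min (x k) (1 - x k) := by
    have h := min_le_right (min (x j) (1 - x j) / |ck|) (min (x k) (1 - x k) / |cj|)
    calc t * |cj| ≤ (min (x k) (1 - x k) / |cj|) * |cj| := by nlinarith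
    _ = min (x k) (1 - x k) := by field_simp
  have habsk : |t * ck| ≤ min (x j) (1 - x j) := by
    rw [abs_mul, abs_of_pos htpos]; exact htck
  have habsj : |t * cj| ≤ min (x k) (1 - x k) := by
    rw [abs_mul, abs_of_pos htpos]; exact htcj
  have hb1 := abs_le.mp habsk
  have hb2 := abs_le.mp habsj
  have hminj1 := min_le_left (x j) (1 - x j)
  have hminj2 := min_le_right (x j) (1 - x j)
  have hmink1 := min_le_left (x k) (1 - x k)
  have hmink2 := min_le_right (x k) (1 - x k)
  have hmm : ∀ s : ℝ, s = 1 ∨ s = -1 →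
      ((Function.update (Function.update x j (x j + s * (t * ck))) k (x k - s * (t * cj)), y)
        : (Fin n → ℝ) × (Fin n → ℝ)) ∈ SB a d := by
    intro s hs
    have hsb : -1 ≤ s ∧ s ≤ 1 := by rcases hs with rfl | rfl <;> norm_num
    refine ⟨?_, hy, ?_⟩
    · intro i
      dsimp only
      by_cases hik : i = k
      · subst hik
        rw [Function.update_self]
        constructor
        · rcases hs with rfl | rfl <;> simp <;> linarith
        · rcases hs with rfl | rfl <;> simp <;> linarith
      · rw [Function.update_of_ne hik]
        by_cases hij : i = j
        · subst hij
          rw [Function.update_self]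
          constructor
          · rcases hs with rfl | rfl <;> simp <;> linarith
          · rcases hs with rfl | rfl <;> simp <;> linarith
        · rw [Function.update_of_ne hij]; exact hx i
    · rw [sum_upd_x a (Function.update x j (x j + s * (t * ck))) y k]
      rw [sum_upd_x a x y j]
      rw [Function.update_of_ne (Ne.symm hjk)]
      have : a j * ((x j + s * (t * ck) - x j) * y j)
          + a k * ((x k - s * (t * cj) - x k) * y k) = 0 := by
        rw [hcjdef, hckdef]; ring
      linarith [this, hd]
  have hp := hmm 1 (Or.inl rfl)
  have hq := hmm (-1) (Or.inr rfl)
  norm_num at hp hq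
  refine notExt hp hq ?_ ?_
  · intro h
    have := congrArg (fun r => r.1 j) h
    simp only [Function.update_of_ne hjk, Function.update_self] at this
    have htckne : t * ck ≠ 0 := by
      intro h0
      rcases mul_eq_zero.mp h0 with h0 | h0
      · exact absurd h0 (ne_of_gt htpos)
      · exact hck h0
    apply htckne
    linarith
  · ext i
    · show x i = _
      simp only [Prod.fst_add, Prod.smul_fst, Pi.add_apply, Pi.smul_apply, smul_eq_mul,
        Function.update_apply]
      split_ifs with h h'
      · subst h; ring
      · subst h'; ring
      · ring
    · show y i = _
      simp only [Prod.snd_add, Prod.smul_snd, Pi.add_apply, Pi.smul_apply, smul_eq_mul]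
      ring

/-- Move: coordinate j with interior x-entry, coordinate k with interior y-entry. -/
lemma move_Dxy (hmem : (x, y) ∈ SB a d) (j k : Fin n) (hjk : j ≠ k)
    (h0j : 0 < x j) (h1j : x j < 1) (h0k : 0 < y k) (h1k : y k < 1)
    (hcj : a j * y j ≠ 0) (hck : a k * x k ≠ 0) :
    (x, y) ∉ (convexHull ℝ (SB a d)).extremePoints ℝ := by
  obtain ⟨hx, hy, hd⟩ := hmem
  set cj : ℝ := a j * y j with hcjdef
  set ck : ℝ := a k * x k with hckdef
  have hcja : 0 < |cj| := abs_pos.mpr hcj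
  have hcka : 0 < |ck| := abs_pos.mpr hck
  set t : ℝ := min (min (x j) (1 - x j) / |ck|) (min (y k) (1 - y k) / |cj|) with ht
  have htpos : 0 < t := by
    apply lt_min <;> apply div_pos (lt_min (by linarith) (by linarith)) <;> assumption
  have htck : t * |ck| ≤ min (x j) (1 - x j) := by
    have h := min_le_left (min (x j) (1 - x j) / |ck|) (min (y k) (1 - y k) / |cj|)
    calc t * |ck| ≤ (min (x j) (1 - x j) / |ck|) * |ck| := by nlinarith
    _ = min (x j) (1 - x j) := by field_simp
  have htcj : t * |cj| ≤ min (y k) (1 - y k) := by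
    have h := min_le_right (min (x j) (1 - x j) / |ck|) (min (y k) (1 - y k) / |cj|)
    calc t * |cj| ≤ (min (y k) (1 - y k) / |cj|) * |cj| := by nlinarith
    _ = min (y k) (1 - y k) := by field_simp
  have hb1 := abs_le.mp (by rw [abs_mul, abs_of_pos htpos]; exact htck : |t * ck| ≤ min (x j) (1 - x j))
  have hb2 := abs_le.mp (by rw [abs_mul, abs_of_pos htpos]; exact htcj : |t * cj| ≤ min (y k) (1 - y k))
  have hminj1 := min_le_left (x j) (1 - x j)
  have hminj2 := min_le_right (x j) (1 - x j)
  have hmink1 := min_le_left (y k) (1 - y k)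
  have hmink2 := min_le_right (y k) (1 - y k)
  have hmm : ∀ s : ℝ, s = 1 ∨ s = -1 →
      ((Function.update x j (x j + s * (t * ck)), Function.update y k (y k - s * (t * cj)))
        : (Fin n → ℝ) × (Fin n → ℝ)) ∈ SB a d := by
    intro s hs
    refine ⟨?_, ?_, ?_⟩
    · intro i
      dsimp only
      by_cases hij : i = j
      · subst hij
        rw [Function.update_self]
        constructor
        · rcases hs with rfl | rfl <;> simp <;> linarith
        · rcases hs with rfl | rfl <;> simp <;> linarith
      · rw [Function.update_of_ne hij]; exact hx i
    · intro i
      dsimp only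
      by_cases hik : i = k
      · subst hik
        rw [Function.update_self]
        constructor
        · rcases hs with rfl | rfl <;> simp <;> linarith
        · rcases hs with rfl | rfl <;> simp <;> linarith
      · rw [Function.update_of_ne hik]; exact hy i
    · rw [sum_upd_y a (Function.update x j (x j + s * (t * ck))) y k]
      rw [sum_upd_x a x y j]
      rw [Function.update_of_ne (Ne.symm hjk)]
      have : a j * ((x j + s * (t * ck) - x j) * y j)
          + a k * (x k * (y k - s * (t * cj) - y k)) = 0 := by
        rw [hcjdef, hckdef]; ring
      linarith [this, hd]
  have hp := hmm 1 (Or.inl rfl)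
  have hq := hmm (-1) (Or.inr rfl)
  norm_num at hp hq
  refine notExt hp hq ?_ ?_
  · intro h
    have := congrArg (fun r => r.1 j) h
    simp only [Function.update_self] at this
    have htckne : t * ck ≠ 0 := by
      intro h0
      rcases mul_eq_zero.mp h0 with h0 | h0
      · exact absurd h0 (ne_of_gt htpos)
      · exact hck h0
    apply htckne
    linarith
  · ext i
    · show x i = _
      simp only [Prod.fst_add, Prod.smul_fst, Pi.add_apply, Pi.smul_apply, smul_eq_mul,
        Function.update_apply]
      split_ifs with h
      · subst h; ring
      · ring
    · show y i = _
      simp only [Prod.snd_add, Prod.smul_snd, Pi.add_apply, Pi.smul_apply, smul_eq_mul,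
        Function.update_apply]
      split_ifs with h
      · subst h; ring
      · ring

end bilinear2
section classification

variable {n : ℕ}

/-- Existence of a singleton minimal cover yielding partition. -/
def covC (a : Fin n → ℝ) (d : ℝ) : Prop :=
  ∃ i : Fin n, 0 < a i ∧ ∃ J : Finset (Fin n), i ∉ J ∧
    d - a i < ∑ j ∈ J, a j ∧ ∑ j ∈ J, a j < d

/-- The finite set of candidate coordinate values. -/
def Tv (a : Fin n → ℝ) (d : ℝ) : Set ℝ :=
  {t | t = 0 ∨ t = 1 ∨ ∃ (i : Fin n) (J : Finset (Fin n)), t = (d - ∑ j ∈ J, a j) / a i}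

lemma Tv_finite (a : Fin n → ℝ) (d : ℝ) : (Tv a d).Finite := by
  have hsub : Tv a d ⊆ {0, 1} ∪
      Set.range (fun p : Fin n × Finset (Fin n) => (d - ∑ j ∈ p.2, a j) / a p.1) := by
    rintro t (rfl | rfl | ⟨i, J, rfl⟩)
    · exact Or.inl (Or.inl rfl)
    · exact Or.inl (Or.inr rfl)
    · exact Or.inr ⟨(i, J), rfl⟩
  exact (((Set.finite_singleton (1:ℝ)).insert 0).union (Set.finite_range _)).subset hsub

variable {a : Fin n → ℝ} {d : ℝ}

lemma core_x (hnC : ¬ covC a d) {x y : Fin n → ℝ}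
    (hext : (x, y) ∈ (convexHull ℝ (SB a d)).extremePoints ℝ)
    (hmem : (x, y) ∈ SB a d)
    (i : Fin n) (h0 : 0 < x i) (h1 : x i < 1) (hT : x i ∉ Tv a d) : False := by
  classical
  obtain ⟨hx, hy, hd⟩ := hmem
  have hmem : (x, y) ∈ SB a d := ⟨hx, hy, hd⟩
  have hmem' : (y, x) ∈ SB a d := ⟨hy, hx, by
    have : ∑ j, a j * (y j * x j) = ∑ j, a j * (x j * y j) :=
      Finset.sum_congr rfl fun j _ => by ring
    rw [this]; exact hd⟩
  by_cases hs : d < ∑ j, a j * (x j * y j)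
  · exact move_slack hmem i h0 h1 hs hext
  have htight : ∑ j, a j * (x j * y j) = d := le_antisymm (not_lt.mp hs) hd
  by_cases hA : ∃ j, (0 < x j ∧ x j < 1 ∧ a j * y j = 0) ∨ (0 < y j ∧ y j < 1 ∧ a j * x j = 0)
  · obtain ⟨j, hj | hj⟩ := hA
    · exact move_Ax hmem j hj.1 hj.2.1 hj.2.2 hext
    · exact move_Ax hmem' j hj.1 hj.2.1 hj.2.2 (swap_ext hext)
  push_neg at hA
  by_cases hCv : ∃ j, a j < 0 ∧ 0 < x j ∧ x j < 1 ∧ 0 < y j ∧ y j < 1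
  · obtain ⟨j, hj⟩ := hCv
    exact move_curve hmem j hj.1 hj.2.1 hj.2.2.1 hj.2.2.2.1 hj.2.2.2.2 hext
  push_neg at hCv
  have hci : a i * y i ≠ 0 := (hA i).1 h0 h1
  have hyine : y i ≠ 0 := fun h => hci (by rw [h, mul_zero])
  have hai : a i ≠ 0 := fun h => hci (by rw [h, zero_mul])
  have hint : ∀ j, j ≠ i → (x j = 0 ∨ x j = 1) ∧ (y j = 0 ∨ y j = 1) := by
    intro j hji
    constructor
    · by_contra hxj
      push_neg at hxj
      have hl : 0 < x j := lt_of_le_of_ne (hx j).1 (Ne.symm hxj.1)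
      have hu : x j < 1 := lt_of_le_of_ne (hx j).2 hxj.2
      exact move_Dxx hmem i j (Ne.symm hji) h0 h1 hl hu hci ((hA j).1 hl hu) hext
    · by_contra hyj
      push_neg at hyj
      have hl : 0 < y j := lt_of_le_of_ne (hy j).1 (Ne.symm hyj.1)
      have hu : y j < 1 := lt_of_le_of_ne (hy j).2 hyj.2
      exact move_Dxy hmem i j (Ne.symm hji) h0 h1 hl hu hci ((hA j).2 hl hu) hext
  set J : Finset (Fin n) := Finset.univ.filter (fun j => j ≠ i ∧ x j * y j = 1) with hJ
  have hiJ : i ∉ J := by simp [hJ]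
  have hsplit : ∑ j, a j * (x j * y j) = a i * (x i * y i) + ∑ j ∈ J, a j := by
    rw [Fintype.sum_eq_add_sum_compl i (fun j => a j * (x j * y j))]
    congr 1
    have hJsub : J ⊆ ({i}ᶜ : Finset (Fin n)) := by
      intro j hj
      simp only [hJ, Finset.mem_filter] at hj
      simpa using hj.2.1
    have hvan : ∀ j ∈ ({i}ᶜ : Finset (Fin n)), j ∉ J → a j * (x j * y j) = 0 := by
      intro j hj1 hj2
      have hji : j ≠ i := by simpa using hj1
      rcases (hint j hji).1 with h | h <;> rcases (hint j hji).2 with h' | h'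
      · rw [h]; ring
      · rw [h]; ring
      · rw [h']; ring
      · exact absurd (by simp [hJ, hji, h, h']) hj2
    rw [← Finset.sum_subset hJsub hvan]
    refine Finset.sum_congr rfl fun j hj => ?_
    simp only [hJ, Finset.mem_filter] at hj
    rw [hj.2.2, mul_one]
  have hpin : a i * (x i * y i) = d - ∑ j ∈ J, a j := by
    rw [htight] at hsplit; linarith
  have hyi1 : y i ≤ 1 := (hy i).2
  rcases eq_or_lt_of_le hyi1 with hy1 | hy1
  · -- y i = 1 : the value x i is pinned, contradiction with hT
    apply hT
    right; right
    refine ⟨i, J, ?_⟩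
    rw [← hpin, hy1, mul_one]
    field_simp
  · -- 0 < y i < 1
    have hyi0 : 0 < y i := lt_of_le_of_ne (hy i).1 (Ne.symm hyine)
    have hapos : 0 < a i := by
      rcases lt_trichotomy (a i) 0 with hneg | hzero | hpos
      · exact absurd (hCv i hneg h0 h1 hyi0) (not_le.mpr hy1)
      · exact absurd hzero hai
      · exact hpos
    have hz0 : 0 < x i * y i := mul_pos h0 hyi0
    have hz1 : x i * y i < 1 := by nlinarith
    exact hnC ⟨i, hapos, J, hiJ, by nlinarith, by nlinarith⟩

lemma ext_sub (hnC : ¬ covC a d) :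
    (convexHull ℝ (SB a d)).extremePoints ℝ ⊆
      {p : (Fin n → ℝ) × (Fin n → ℝ) | p ∈ SB a d ∧
        ∀ i, p.1 i ∈ Tv a d ∧ p.2 i ∈ Tv a d} := by
  rintro ⟨x, y⟩ hp
  have hmem : (x, y) ∈ SB a d := extremePoints_convexHull_subset hp
  have hmem' : (y, x) ∈ SB a d := ⟨hmem.2.1, hmem.1, by
    have : ∑ j, a j * (y j * x j) = ∑ j, a j * (x j * y j) :=
      Finset.sum_congr rfl fun j _ => by ring
    rw [this]; exact hmem.2.2⟩
  refine ⟨hmem, fun i => ⟨?_, ?_⟩⟩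
  · by_contra hT
    have h0 : x i ≠ 0 := fun h => hT (Or.inl h)
    have h1 : x i ≠ 1 := fun h => hT (Or.inr (Or.inl h))
    exact core_x hnC hp hmem i (lt_of_le_of_ne (hmem.1 i).1 (Ne.symm h0))
      (lt_of_le_of_ne (hmem.1 i).2 h1) hT
  · by_contra hT
    have h0 : y i ≠ 0 := fun h => hT (Or.inl h)
    have h1 : y i ≠ 1 := fun h => hT (Or.inr (Or.inl h))
    exact core_x hnC (swap_ext hp) hmem' i (lt_of_le_of_ne (hmem.2.1 i).1 (Ne.symm h0))
      (lt_of_le_of_ne (hmem.2.1 i).2 h1) hT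

lemma SB_isCompact (a : Fin n → ℝ) (d : ℝ) : IsCompact (SB a d) := by
  have hclosed : IsClosed (SB a d) := by
    have h1 : IsClosed {p : (Fin n → ℝ) × (Fin n → ℝ) | ∀ i, p.1 i ∈ Set.Icc (0:ℝ) 1} := by
      rw [show {p : (Fin n → ℝ) × (Fin n → ℝ) | ∀ i, p.1 i ∈ Set.Icc (0:ℝ) 1}
        = ⋂ i, {p : (Fin n → ℝ) × (Fin n → ℝ) | p.1 i ∈ Set.Icc (0:ℝ) 1} from by ext; simp]
      exact isClosed_iInter fun i =>
        IsClosed.preimage ((continuous_apply i).comp continuous_fst) isClosed_Icc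
    have h2 : IsClosed {p : (Fin n → ℝ) × (Fin n → ℝ) | ∀ i, p.2 i ∈ Set.Icc (0:ℝ) 1} := by
      rw [show {p : (Fin n → ℝ) × (Fin n → ℝ) | ∀ i, p.2 i ∈ Set.Icc (0:ℝ) 1}
        = ⋂ i, {p : (Fin n → ℝ) × (Fin n → ℝ) | p.2 i ∈ Set.Icc (0:ℝ) 1} from by ext; simp]
      exact isClosed_iInter fun i =>
        IsClosed.preimage ((continuous_apply i).comp continuous_snd) isClosed_Icc
    have h3 : IsClosed {p : (Fin n → ℝ) × (Fin n → ℝ) | d ≤ ∑ i, a i * (p.1 i * p.2 i)} :=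
      isClosed_le continuous_const (continuous_finset_sum _ fun i _ =>
        continuous_const.mul (((continuous_apply i).comp continuous_fst).mul
          ((continuous_apply i).comp continuous_snd)))
    have : SB a d = {p : (Fin n → ℝ) × (Fin n → ℝ) | ∀ i, p.1 i ∈ Set.Icc (0:ℝ) 1}
        ∩ ({p : (Fin n → ℝ) × (Fin n → ℝ) | ∀ i, p.2 i ∈ Set.Icc (0:ℝ) 1}
          ∩ {p : (Fin n → ℝ) × (Fin n → ℝ) | d ≤ ∑ i, a i * (p.1 i * p.2 i)}) := by
      rfl
    rw [this]
    exact h1.inter (h2.inter h3)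
  have hbox : IsCompact ((Set.univ.pi fun _ : Fin n => Set.Icc (0:ℝ) 1) ×ˢ
      (Set.univ.pi fun _ : Fin n => Set.Icc (0:ℝ) 1)) :=
    (isCompact_univ_pi fun _ => isCompact_Icc).prod (isCompact_univ_pi fun _ => isCompact_Icc)
  refine hbox.of_isClosed_subset hclosed ?_
  rintro p ⟨hp1, hp2, -⟩
  exact ⟨fun i _ => hp1 i, fun i _ => hp2 i⟩

end classification
/-- For a nonempty separable bilinear set S, either there exists a
minimal cover yielding partition (I, J₀, J₁) of [n], or conv(S) is a polytope. -/
theorem stmt_2 (n : ℕ) (hn : 1 ≤ n) (a : Fin n → ℝ) (d : ℝ)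
    (S : Set ((Fin n → ℝ) × (Fin n → ℝ)))
    (hS : S = {p : (Fin n → ℝ) × (Fin n → ℝ) |
      (∀ i, p.1 i ∈ Set.Icc (0 : ℝ) 1) ∧ (∀ i, p.2 i ∈ Set.Icc (0 : ℝ) 1) ∧
      d ≤ ∑ i, a i * (p.1 i * p.2 i)})
    (hne : S.Nonempty) :
    (∃ I J0 J1 : Finset (Fin n),
      -- (I, J₀, J₁) is a partition of [n] with I ≠ ∅
      I.Nonempty ∧ Disjoint I J0 ∧ Disjoint I J1 ∧ Disjoint J0 J1 ∧
      I ∪ J0 ∪ J1 = Finset.univ ∧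
      -- {a_i : i ∈ I} forms a minimal cover of d − ∑_{i ∈ J₁} a_i
      (∀ i ∈ I, 0 < a i) ∧ 0 < d - ∑ i ∈ J1, a i ∧
      d - ∑ i ∈ J1, a i < ∑ i ∈ I, a i ∧
      (∀ K : Finset (Fin n), K ⊂ I → ∑ i ∈ K, a i ≤ d - ∑ i ∈ J1, a i)) ∨
    (∃ F : Finset ((Fin n → ℝ) × (Fin n → ℝ)),
      convexHull ℝ S = convexHull ℝ (F : Set ((Fin n → ℝ) × (Fin n → ℝ)))) := by
  classical
  have hSB : S = SB a d := hS
  by_cases hC : covC a d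
  · left
    obtain ⟨i, hai, J, hiJ, hlow, hhigh⟩ := hC
    refine ⟨{i}, (insert i J)ᶜ, J, Finset.singleton_nonempty i, ?_, ?_, ?_, ?_, ?_, ?_, ?_, ?_⟩
    · exact Finset.disjoint_singleton_left.mpr (by simp)
    · exact Finset.disjoint_singleton_left.mpr hiJ
    · exact disjoint_compl_left.mono_right (Finset.subset_insert i J)
    · ext j
      simp only [Finset.mem_union, Finset.mem_compl, Finset.mem_insert, Finset.mem_singleton,
        Finset.mem_univ, iff_true]
      tauto
    · intro j hj
      rw [Finset.mem_singleton] at hj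
      subst hj
      exact hai
    · linarith
    · rw [Finset.sum_singleton]; linarith
    · intro K hK
      have hKe : K = ∅ := Finset.eq_empty_of_ssubset_singleton hK
      subst hKe
      rw [Finset.sum_empty]
      linarith
  · right
    rw [hSB]
    set G : Set ((Fin n → ℝ) × (Fin n → ℝ)) :=
      {p | p ∈ SB a d ∧ ∀ i, p.1 i ∈ Tv a d ∧ p.2 i ∈ Tv a d} with hG
    have hTfin := Tv_finite a d
    have hpifin : ({f : Fin n → ℝ | ∀ i, f i ∈ Tv a d}).Finite := by
      have heq : {f : Fin n → ℝ | ∀ i, f i ∈ Tv a d} = Set.pi Set.univ (fun _ => Tv a d) := by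
        ext f; simp
      rw [heq]
      exact Set.Finite.pi fun _ => hTfin
    have hGfin : G.Finite := by
      apply (hpifin.prod hpifin).subset
      rintro ⟨u, v⟩ ⟨-, h2⟩
      exact ⟨fun i => (h2 i).1, fun i => (h2 i).2⟩
    refine ⟨hGfin.toFinset, ?_⟩
    have hcoe : (hGfin.toFinset : Set ((Fin n → ℝ) × (Fin n → ℝ))) = G := hGfin.coe_toFinset
    apply Set.Subset.antisymm
    · have hKM := closure_convexHull_extremePoints
        (isCompact_convexHull' (SB_isCompact a d)) (convex_convexHull ℝ (SB a d))
      have hES : (convexHull ℝ (SB a d)).extremePoints ℝ ⊆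
          (hGfin.toFinset : Set ((Fin n → ℝ) × (Fin n → ℝ))) := by
        rw [hcoe]
        exact ext_sub hC
      calc convexHull ℝ (SB a d)
          = closure (convexHull ℝ ((convexHull ℝ (SB a d)).extremePoints ℝ)) := hKM.symm
        _ ⊆ closure (convexHull ℝ (hGfin.toFinset : Set ((Fin n → ℝ) × (Fin n → ℝ)))) :=
            closure_mono (convexHull_mono hES)
        _ = convexHull ℝ (hGfin.toFinset : Set ((Fin n → ℝ) × (Fin n → ℝ))) :=
            (hGfin.toFinset.finite_toSet.isClosed_convexHull ℝ).closure_eq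
    · apply convexHull_mono
      rw [hcoe]
      exact fun p hp => hp.1
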